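/- On ℂⁿ \ {0} with r² = |z₁|² + ⋯ + |zₙ|², the metric ω_H = (δ_{ij}/r²)√-1 dz_i∧dz̄_j satisfies Ric(ω_H) = -√-1 ∂∂̄ log(r^{-2n}) = n√-1 ∂∂̄ log r², and ω_H - t·Ric(ω_H) = (1/r²)[(1-nt)δ_{ij} + nt z̄_i z_j/r²] √-1 dz_i∧dz̄_j. In particular ω(t) = ω_H - t·Ric(ω_H) is positive definite for 0 ≤ t < 1/n and solves the Chern-Ricci flow on [0, 1/n). -/

import Mathlib

open Complex
open scoped ComplexOrder

/-- `r² = |z₁|² + ⋯ + |zₙ|²` on `ℂⁿ`. -/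
noncomputable def r2 {n : ℕ} (z : Fin n → ℂ) : ℝ := ∑ i, Complex.normSq (z i)

/-- Wirtinger derivative `∂/∂z_i` of a function on `ℂⁿ`. -/
noncomputable def wdP {n : ℕ} (i : Fin n) (f : (Fin n → ℂ) → ℂ) (z : Fin n → ℂ) : ℂ :=
  (fderiv ℝ f z (Pi.single i 1) - Complex.I * fderiv ℝ f z (Pi.single i Complex.I)) / 2

/-- Wirtinger derivative `∂/∂z̄_i` of a function on `ℂⁿ`. -/
noncomputable def wdbP {n : ℕ} (i : Fin n) (f : (Fin n → ℂ) → ℂ) (z : Fin n → ℂ) : ℂ :=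
  (fderiv ℝ f z (Pi.single i 1) + Complex.I * fderiv ℝ f z (Pi.single i Complex.I)) / 2

/-- The coefficients of the metric `ω_H = (δ_{ij}/r²) √-1 dz_i∧dz̄_j` on `ℂⁿ \ {0}`. -/
noncomputable def gHopf {n : ℕ} (z : Fin n → ℂ) : Matrix (Fin n) (Fin n) ℂ :=
  Matrix.of fun i j => (if i = j then 1 else 0) / ((r2 z : ℝ) : ℂ)

/-- The coefficients of `Ric(ω_H) = n √-1 ∂∂̄ log r²`, namely
`n (δ_{ij}/r² - z̄_i z_j/r⁴)`. -/
noncomputable def RicHopf (n : ℕ) (z : Fin n → ℂ) : Matrix (Fin n) (Fin n) ℂ :=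
  Matrix.of fun i j =>
    (n : ℂ) * ((if i = j then 1 else 0) / ((r2 z : ℝ) : ℂ)
      - (starRingEnd ℂ) (z i) * z j / ((r2 z : ℝ) : ℂ) ^ 2)

/-- The coefficients `(1/r²)[(1-nt)δ_{ij} + nt z̄_i z_j/r²]` of `ω(t) = ω_H - t Ric(ω_H)`. -/
noncomputable def AHopf (n : ℕ) (t : ℝ) (z : Fin n → ℂ) : Matrix (Fin n) (Fin n) ℂ :=
  Matrix.of fun i j =>
    ((((1 - n * t : ℝ)) : ℂ) * (if i = j then 1 else 0)
      + (((n * t : ℝ)) : ℂ) * (starRingEnd ℂ) (z i) * z j / ((r2 z : ℝ) : ℂ)) / ((r2 z : ℝ) : ℂ)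


noncomputable def Lsq (x : ℂ) : ℂ →L[ℝ] ℝ :=
  (2*x.re) • Complex.reCLM + (2*x.im) • Complex.imCLM

lemma hasFDerivAt_normSq (x : ℂ) : HasFDerivAt Complex.normSq (Lsq x) x := by
  have h := ((Complex.reCLM.hasFDerivAt (x := x)).mul (Complex.reCLM.hasFDerivAt (x := x))).add
      ((Complex.imCLM.hasFDerivAt (x := x)).mul (Complex.imCLM.hasFDerivAt (x := x)))
  have e1 : (⇑Complex.reCLM * ⇑Complex.reCLM + ⇑Complex.imCLM * ⇑Complex.imCLM : ℂ → ℝ) = Complex.normSq := by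
    funext x; exact (Complex.normSq_apply x).symm
  rw [e1] at h
  refine h.congr_fderiv ?_
  ext v <;> simp [Lsq] <;> ring

noncomputable def Lr2 {n : ℕ} (w : Fin n → ℂ) : (Fin n → ℂ) →L[ℝ] ℝ :=
  ∑ i, (Lsq (w i)).comp (ContinuousLinearMap.proj i)

lemma hasFDerivAt_r2 {n : ℕ} (w : Fin n → ℂ) : HasFDerivAt r2 (Lr2 w) w := by
  apply HasFDerivAt.fun_sum
  intro i _
  exact (hasFDerivAt_normSq (w i)).comp w
    (ContinuousLinearMap.proj (R := ℝ) (φ := fun _ : Fin n => ℂ) i).hasFDerivAt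

lemma Lr2_single_one {n : ℕ} (w : Fin n → ℂ) (i : Fin n) :
    Lr2 w (Pi.single i 1) = 2 * (w i).re := by
  simp [Lr2, Lsq, ContinuousLinearMap.sum_apply, Pi.single_apply]
  rw [Finset.sum_eq_single i] <;> simp +contextual

lemma Lr2_single_I {n : ℕ} (w : Fin n → ℂ) (i : Fin n) :
    Lr2 w (Pi.single i Complex.I) = 2 * (w i).im := by
  simp [Lr2, Lsq, ContinuousLinearMap.sum_apply, Pi.single_apply]
  rw [Finset.sum_eq_single i] <;> simp +contextual

lemma hasFDerivAt_logr2 {n : ℕ} (w : Fin n → ℂ) (hw : r2 w ≠ 0) :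
    HasFDerivAt (fun w => ((Real.log (r2 w) : ℝ) : ℂ))
      (Complex.ofRealCLM.comp ((r2 w)⁻¹ • Lr2 w)) w := by
  exact Complex.ofRealCLM.hasFDerivAt.comp w
    ((Real.hasDerivAt_log hw).comp_hasFDerivAt w (hasFDerivAt_r2 w))

lemma wdbP_logr2 {n : ℕ} (j : Fin n) (w : Fin n → ℂ) (hw : r2 w ≠ 0) :
    wdbP j (fun w => ((Real.log (r2 w) : ℝ) : ℂ)) w = w j / ((r2 w : ℝ) : ℂ) := by
  rw [wdbP, (hasFDerivAt_logr2 w hw).fderiv]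
  simp [Lr2_single_one, Lr2_single_I]
  rw [Complex.ext_iff]
  constructor <;> · simp; field_simp

noncomputable def Dg {n : ℕ} (j : Fin n) (w : Fin n → ℂ) : (Fin n → ℂ) →L[ℝ] ℂ :=
  (((r2 w : ℝ) : ℂ))⁻¹ • (ContinuousLinearMap.proj (R := ℝ) (φ := fun _ : Fin n => ℂ) j)
    + (w j) • (Complex.ofRealCLM.comp (-((r2 w) ^ 2)⁻¹ • Lr2 w))

lemma hasFDerivAt_g {n : ℕ} (j : Fin n) (w : Fin n → ℂ) (hw : r2 w ≠ 0) :
    HasFDerivAt (fun w => w j / ((r2 w : ℝ) : ℂ)) (Dg j w) w := by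
  have hinv : HasFDerivAt (fun w : Fin n → ℂ => (((r2 w)⁻¹ : ℝ) : ℂ))
      (Complex.ofRealCLM.comp (-((r2 w) ^ 2)⁻¹ • Lr2 w)) w :=
    Complex.ofRealCLM.hasFDerivAt.comp w ((hasDerivAt_inv hw).comp_hasFDerivAt w (hasFDerivAt_r2 w))
  have hproj : HasFDerivAt (fun w : Fin n → ℂ => w j)
      (ContinuousLinearMap.proj (R := ℝ) (φ := fun _ : Fin n => ℂ) j) w :=
    (ContinuousLinearMap.proj (R := ℝ) (φ := fun _ : Fin n => ℂ) j).hasFDerivAt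
  have h := hproj.mul hinv
  simp only [Complex.ofReal_inv] at h
  simp only [div_eq_mul_inv]
  refine h.congr_fderiv ?_
  ext v <;> simp [Dg] <;> ring

lemma Dg_single_one {n : ℕ} (j : Fin n) (w : Fin n → ℂ) (i : Fin n) :
    Dg j w (Pi.single i 1)
      = (((r2 w : ℝ) : ℂ))⁻¹ * (if i = j then 1 else 0)
        + w j * (-(((r2 w : ℝ):ℂ) ^ 2)⁻¹ * (2 * (w i).re)) := by
  simp [Dg, Lr2_single_one, Pi.single_apply, eq_comm]

lemma Dg_single_I {n : ℕ} (j : Fin n) (w : Fin n → ℂ) (i : Fin n) :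
    Dg j w (Pi.single i Complex.I)
      = (((r2 w : ℝ) : ℂ))⁻¹ * (if i = j then Complex.I else 0)
        + w j * (-(((r2 w : ℝ):ℂ) ^ 2)⁻¹ * (2 * (w i).im)) := by
  simp [Dg, Lr2_single_I, Pi.single_apply, eq_comm]

lemma wdP_g {n : ℕ} (i j : Fin n) (z : Fin n → ℂ) (hz : r2 z ≠ 0) :
    wdP i (fun w => w j / ((r2 w : ℝ) : ℂ)) z
      = (if i = j then 1 else 0) / ((r2 z : ℝ) : ℂ)
        - (starRingEnd ℂ) (z i) * z j / ((r2 z : ℝ) : ℂ) ^ 2 := by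
  rw [wdP, (hasFDerivAt_g j z hz).fderiv, Dg_single_one, Dg_single_I]
  rw [show (starRingEnd ℂ) (z i) = ((z i).re : ℂ) - ((z i).im : ℂ) * Complex.I by
    simp [Complex.ext_iff]]
  by_cases h : i = j <;> simp [h] <;> ring_nf <;> simp [Complex.I_sq] <;> ring_nf

lemma continuous_r2 {n : ℕ} : Continuous (r2 (n := n)) := by
  unfold r2
  exact continuous_finset_sum _ fun i _ => Complex.continuous_normSq.comp (continuous_apply i)

lemma eventually_r2_ne {n : ℕ} (z : Fin n → ℂ) (hz : r2 z ≠ 0) :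
    ∀ᶠ w in nhds z, r2 w ≠ 0 :=
  continuous_r2.continuousAt.eventually_ne hz

lemma wdP_congr {n : ℕ} (i : Fin n) {f g : (Fin n → ℂ) → ℂ} {z : Fin n → ℂ}
    (h : f =ᶠ[nhds z] g) : wdP i f z = wdP i g z := by
  unfold wdP; rw [h.fderiv_eq]

lemma wdbP_const_mul {n : ℕ} (j : Fin n) (c : ℂ) (f : (Fin n → ℂ) → ℂ) (w : Fin n → ℂ)
    (hf : DifferentiableAt ℝ f w) :
    wdbP j (fun w => c * f w) w = c * wdbP j f w := by
  unfold wdbP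
  rw [fderiv_const_mul hf]
  simp
  ring

lemma wdbP_const_add {n : ℕ} (j : Fin n) (c : ℂ) (f : (Fin n → ℂ) → ℂ) (w : Fin n → ℂ) :
    wdbP j (fun w => c + f w) w = wdbP j f w := by
  unfold wdbP
  rw [fderiv_const_add]

lemma wdbP_congr {n : ℕ} (j : Fin n) {f g : (Fin n → ℂ) → ℂ} {w : Fin n → ℂ}
    (h : f =ᶠ[nhds w] g) : wdbP j f w = wdbP j g w := by
  unfold wdbP; rw [h.fderiv_eq]

lemma wdP_master {n : ℕ} (i j : Fin n) (z : Fin n → ℂ) (hz : r2 z ≠ 0) (c : ℂ)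
    (f : (Fin n → ℂ) → ℂ)
    (hf : ∀ᶠ w in nhds z, wdbP j f w = c * (w j / ((r2 w : ℝ) : ℂ))) :
    wdP i (wdbP j f) z
      = c * ((if i = j then 1 else 0) / ((r2 z : ℝ) : ℂ)
          - (starRingEnd ℂ) (z i) * z j / ((r2 z : ℝ) : ℂ) ^ 2) := by
  rw [wdP_congr i hf]
  have hd : DifferentiableAt ℝ (fun w => w j / ((r2 w : ℝ) : ℂ)) z :=
    (hasFDerivAt_g j z hz).differentiableAt
  have : wdP i (fun w => c * (w j / ((r2 w : ℝ) : ℂ))) z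
      = c * wdP i (fun w => w j / ((r2 w : ℝ) : ℂ)) z := by
    unfold wdP
    rw [fderiv_const_mul hd]
    simp
    ring
  rw [this, wdP_g i j z hz]

lemma sum_mul_conj {n : ℕ} (w : Fin n → ℂ) :
    ∑ i, w i * (starRingEnd ℂ) (w i) = ((r2 w : ℝ) : ℂ) := by
  rw [r2]
  push_cast
  exact Finset.sum_congr rfl fun i _ => (Complex.mul_conj (w i))

lemma det_AHopf {n : ℕ} (t : ℝ) (w : Fin n → ℂ) (hw : r2 w ≠ 0) (ha : (1 : ℝ) - n * t ≠ 0) :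
    (AHopf n t w).det = ((((1 - n * t : ℝ) ^ (n - 1) / (r2 w) ^ n : ℝ)) : ℂ) := by
  rcases Nat.eq_zero_or_pos n with hn | hn
  · subst hn
    simp [AHopf, Matrix.det_isEmpty, r2] at hw ⊢
  have hR0 : ((r2 w : ℝ) : ℂ) ≠ 0 := Complex.ofReal_ne_zero.mpr hw
  have ha0 : (((1 - n * t : ℝ)) : ℂ) ≠ 0 := Complex.ofReal_ne_zero.mpr ha
  have ha0' : ((1 : ℂ) - (n : ℂ) * (t : ℂ)) ≠ 0 := by
    push_cast at ha0; convert ha0 using 2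
  have key : AHopf n t w
      = (((r2 w : ℝ) : ℂ))⁻¹ • ((((1 - n * t : ℝ)) : ℂ) •
          (1 + Matrix.replicateCol Unit
              (fun i => (((n * t : ℝ) : ℂ) / ((((1 - n * t : ℝ)) : ℂ) * ((r2 w : ℝ) : ℂ)))
                * (starRingEnd ℂ) (w i))
            * Matrix.replicateRow Unit w)) := by
    ext i j
    simp [AHopf, Matrix.mul_apply, Matrix.one_apply, Matrix.replicateCol, Matrix.replicateRow,
      Matrix.smul_apply, smul_eq_mul]
    push_cast
    field_simp
  rw [key, Matrix.det_smul, Matrix.det_smul, Matrix.det_one_add_replicateCol_mul_replicateRow]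
  have hdot : (dotProduct w fun i => (((n * t : ℝ) : ℂ) / ((((1 - n * t : ℝ)) : ℂ) * ((r2 w : ℝ) : ℂ)))
        * (starRingEnd ℂ) (w i))
      = (((n * t : ℝ) : ℂ)) / (((1 - n * t : ℝ) : ℂ)) := by
    unfold dotProduct
    have : ∀ i, w i * ((((n * t : ℝ) : ℂ) / ((((1 - n * t : ℝ)) : ℂ) * ((r2 w : ℝ) : ℂ)))
        * (starRingEnd ℂ) (w i))
        = (((n * t : ℝ) : ℂ) / ((((1 - n * t : ℝ)) : ℂ) * ((r2 w : ℝ) : ℂ))) * (w i * (starRingEnd ℂ) (w i)) :=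
      fun i => by ring
    rw [Finset.sum_congr rfl fun i _ => this i, ← Finset.mul_sum, sum_mul_conj]
    field_simp
  rw [hdot]
  have h2 : (1 : ℂ) + ((n * t : ℝ) : ℂ) / ((1 - n * t : ℝ) : ℂ) = (((1 - n*t:ℝ):ℂ))⁻¹ := by
    field_simp
    push_cast; ring
  rw [h2]
  have hpow : (((1 - n * t : ℝ)) : ℂ) ^ n * (((1 - n*t:ℝ):ℂ))⁻¹ = (((1 - n * t : ℝ)) : ℂ) ^ (n - 1) := by
    have h3 := pow_sub₀ (((1 - n*t:ℝ):ℂ)) ha0 (show 1 ≤ n by omega)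
    rw [pow_one] at h3
    rw [← h3]
  rw [Fintype.card_fin, hpow]
  push_cast
  field_simp
  rw [← mul_pow, one_div, inv_mul_cancel₀ hR0, one_pow]

lemma r2_nonneg {n : ℕ} (w : Fin n → ℂ) : 0 ≤ r2 w :=
  Finset.sum_nonneg fun i _ => Complex.normSq_nonneg _

lemma r2_pos {n : ℕ} {w : Fin n → ℂ} (hw : w ≠ 0) : 0 < r2 w := by
  rcases Function.ne_iff.mp hw with ⟨i, hi⟩
  have : 0 < Complex.normSq (w i) := by
    simpa using Complex.normSq_pos.mpr (by simpa using hi)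
  exact lt_of_lt_of_le this (Finset.single_le_sum (fun j _ => Complex.normSq_nonneg (w j))
    (Finset.mem_univ i))

lemma conj_sum {n : ℕ} (z x : Fin n → ℂ) :
    (starRingEnd ℂ) (∑ i, z i * x i) = ∑ i, (starRingEnd ℂ) (x i) * (starRingEnd ℂ) (z i) := by
  rw [map_sum]
  exact Finset.sum_congr rfl fun i _ => by rw [map_mul]; ring

lemma quadform_AHopf {n : ℕ} (t : ℝ) (z x : Fin n → ℂ) (hz : r2 z ≠ 0) :
    dotProduct (star x) (Matrix.mulVec (AHopf n t z) x)
      = ((((1 - n * t) * r2 x + (n * t) * Complex.normSq (∑ i, z i * x i) / r2 z) / r2 z : ℝ) : ℂ) := by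
  set a : ℂ := (((1 - n * t : ℝ)) : ℂ) with ha'
  set b : ℂ := (((n * t : ℝ)) : ℂ) with hb'
  set R : ℂ := ((r2 z : ℝ) : ℂ) with hR
  have hR0 : R ≠ 0 := Complex.ofReal_ne_zero.mpr hz
  set S : ℂ := ∑ i, z i * x i with hS
  have inner : ∀ i, (Matrix.mulVec (AHopf n t z) x) i = a * x i / R + (b * (starRingEnd ℂ) (z i) / (R*R)) * S := by
    intro i
    simp only [Matrix.mulVec, dotProduct, AHopf, Matrix.of_apply]
    have e : ∀ j : Fin n, (a * (if i = j then 1 else 0) + b * (starRingEnd ℂ) (z i) * z j / R) / R * x j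
        = (if i = j then a * x j / R else 0) + (b * (starRingEnd ℂ) (z i) / (R*R)) * (z j * x j) := by
      intro j
      by_cases h : i = j <;> simp [h] <;> ring
    rw [Finset.sum_congr rfl fun j _ => e j, Finset.sum_add_distrib, Finset.sum_ite_eq,
      ← Finset.mul_sum, ← hS]
    simp
  have term : ∀ i, (starRingEnd ℂ) (x i) * (Matrix.mulVec (AHopf n t z) x) i
      = (a / R) * ((starRingEnd ℂ) (x i) * x i)
        + (b / (R*R)) * S * ((starRingEnd ℂ) (x i) * (starRingEnd ℂ) (z i)) := by
    intro i
    rw [inner i]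
    ring
  have outer : dotProduct (star x) (Matrix.mulVec (AHopf n t z) x)
      = (a / R) * ∑ i, (starRingEnd ℂ) (x i) * x i
        + (b / (R*R)) * S * ∑ i, (starRingEnd ℂ) (x i) * (starRingEnd ℂ) (z i) := by
    simp only [dotProduct, Pi.star_apply, RCLike.star_def]
    rw [Finset.sum_congr rfl fun i _ => term i, Finset.sum_add_distrib,
      ← Finset.mul_sum, ← Finset.mul_sum]
  rw [outer, ← conj_sum, ← hS]
  have h1 : ∑ i, (starRingEnd ℂ) (x i) * x i = ((r2 x : ℝ) : ℂ) := by
    rw [r2]; push_cast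
    exact Finset.sum_congr rfl fun i _ => by rw [mul_comm, Complex.mul_conj]
  have h2 : S * (starRingEnd ℂ) S = ((Complex.normSq S : ℝ) : ℂ) := Complex.mul_conj S
  rw [h1]
  rw [show (b / (R*R)) * S * (starRingEnd ℂ) S = (b / (R*R)) * ((Complex.normSq S : ℝ) : ℂ) by
    rw [mul_assoc, h2]]
  rw [hR, ha', hb']
  push_cast
  field_simp

lemma posDef_AHopf {n : ℕ} (t : ℝ) (z : Fin n → ℂ) (hz : z ≠ 0)
    (h1 : 0 < 1 - (n : ℝ) * t) (h2 : 0 ≤ (n : ℝ) * t) : (AHopf n t z).PosDef := by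
  have hr : 0 < r2 z := r2_pos hz
  rw [Matrix.posDef_iff_dotProduct_mulVec]
  constructor
  · ext i j
    simp only [Matrix.conjTranspose_apply, AHopf, Matrix.of_apply, map_div₀, map_add, map_mul,
      Complex.conj_ofReal, Complex.conj_conj, RCLike.star_def]
    by_cases h : i = j
    · subst h; simp; ring
    · rw [if_neg h, if_neg (fun hh => h hh.symm)]
      simp
      ring
  · intro x hx
    rw [quadform_AHopf t z x hr.ne']
    rw [Complex.zero_lt_real]
    have hx2 : 0 < r2 x := r2_pos hx
    have : 0 < (1 - (n:ℝ) * t) * r2 x := mul_pos h1 hx2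
    have hnn : 0 ≤ (n:ℝ) * t * Complex.normSq (∑ i, z i * x i) / r2 z := div_nonneg (mul_nonneg h2 (Complex.normSq_nonneg _)) hr.le
    exact div_pos (lt_of_lt_of_le this (le_add_of_nonneg_right hnn)) hr

lemma wdbP_fpow {n : ℕ} (j : Fin n) (w : Fin n → ℂ) (hw : r2 w ≠ 0) :
    wdbP j (fun w => ((Real.log ((r2 w)⁻¹ ^ n) : ℝ) : ℂ)) w
      = (-(n : ℂ)) * (w j / ((r2 w : ℝ) : ℂ)) := by
  have e : (fun w : Fin n → ℂ => ((Real.log ((r2 w)⁻¹ ^ n) : ℝ) : ℂ))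
      = fun w => (-(n : ℂ)) * ((Real.log (r2 w) : ℝ) : ℂ) := by
    funext v
    rw [Real.log_pow, Real.log_inv]
    push_cast
    ring
  rw [e, wdbP_const_mul j _ _ w (hasFDerivAt_logr2 w hw).differentiableAt, wdbP_logr2 j w hw]

lemma wdbP_fdet {n : ℕ} (t : ℝ) (ht : 0 < 1 - (n : ℝ) * t) (j : Fin n) (w : Fin n → ℂ)
    (hw : r2 w ≠ 0) :
    wdbP j (fun w => Complex.log ((AHopf n t w).det)) w
      = (-(n : ℂ)) * (w j / ((r2 w : ℝ) : ℂ)) := by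
  have hev : (fun v => Complex.log ((AHopf n t v).det)) =ᶠ[nhds w]
      fun v => ((Real.log ((1 - n * t) ^ (n - 1)) : ℝ) : ℂ)
        + (-(n : ℂ)) * ((Real.log (r2 v) : ℝ) : ℂ) := by
    filter_upwards [eventually_r2_ne w hw] with v hv
    rw [det_AHopf t v hv ht.ne']
    have hpos : 0 < r2 v := lt_of_le_of_ne (r2_nonneg v) (Ne.symm hv)
    have h1 : (0:ℝ) < (1 - n * t) ^ (n - 1) := by positivity
    rw [← Complex.ofReal_log (by positivity), Real.log_div h1.ne' (by positivity),
      Real.log_pow, Real.log_pow]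
    push_cast
    ring
  rw [wdbP_congr j hev, wdbP_const_add,
    wdbP_const_mul j _ _ w (hasFDerivAt_logr2 w hw).differentiableAt, wdbP_logr2 j w hw]

lemma deriv_AHopf {n : ℕ} (z : Fin n → ℂ) (i j : Fin n) (t : ℝ) :
    deriv (fun s : ℝ => AHopf n s z i j) t = -RicHopf n z i j := by
  have h1 : HasDerivAt (fun s : ℝ => ((1 - n * s : ℝ) : ℂ)) ((-(n:ℝ) : ℝ) : ℂ) t := by
    apply HasDerivAt.ofReal_comp
    simpa using ((hasDerivAt_id t).const_mul (n:ℝ)).const_sub 1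
  have h2 : HasDerivAt (fun s : ℝ => ((n * s : ℝ) : ℂ)) (((n:ℝ) : ℝ) : ℂ) t := by
    apply HasDerivAt.ofReal_comp
    simpa using (hasDerivAt_id t).const_mul (n:ℝ)
  have h : HasDerivAt (fun s : ℝ => AHopf n s z i j)
      ((((-(n:ℝ) : ℝ) : ℂ) * (if i = j then 1 else 0)
        + (((n:ℝ) : ℝ) : ℂ) * (starRingEnd ℂ) (z i) * z j / ((r2 z : ℝ) : ℂ)) / ((r2 z : ℝ) : ℂ)) t := by
    have h3 := ((h1.mul_const (if i = j then (1:ℂ) else 0)).add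
      (((h2.mul_const ((starRingEnd ℂ) (z i))).mul_const (z j)).div_const ((r2 z : ℝ) : ℂ))).div_const ((r2 z : ℝ) : ℂ)
    exact h3
  rw [h.deriv, RicHopf]
  by_cases hij : i = j <;> by_cases hc : ((r2 z : ℝ) : ℂ) = 0 <;>
    simp [hij, hc] <;> push_cast <;> field_simp <;> ring

lemma one_sub_nt_pos {n : ℕ} (t : ℝ) (ht0 : 0 ≤ t) (ht1 : t < 1 / n) : 0 < 1 - (n:ℝ) * t := by
  rcases Nat.eq_zero_or_pos n with hn | hn
  · subst hn; simp
  · have hn' : (0:ℝ) < n := by exact_mod_cast hn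
    have : t * n < 1 := (lt_div_iff₀ hn').mp ht1
    nlinarith

/-- On `ℂⁿ \ {0}` the metric `ω_H = (δ_{ij}/r²)√-1 dz_i∧dz̄_j` satisfies
`Ric(ω_H) = -√-1 ∂∂̄ log (r^{-2n}) = n √-1 ∂∂̄ log r²`, and
`ω_H - t Ric(ω_H) = (1/r²)[(1-nt)δ_{ij} + nt z̄_i z_j/r²] √-1 dz_i∧dz̄_j`.
In particular `ω(t) = ω_H - t Ric(ω_H)` is positive definite for `0 ≤ t < 1/n` and
solves the Chern-Ricci flow on `[0, 1/n)` (its Chern-Ricci form is constant in time,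
equal to `Ric(ω_H)`, and `∂ω/∂t = -Ric(ω(t))`). -/
theorem stmt3 (n : ℕ) (z : Fin n → ℂ) (hz : z ≠ 0) :
    (∀ i j : Fin n,
      -wdP i (wdbP j (fun w => ((Real.log ((r2 w)⁻¹ ^ n) : ℝ) : ℂ))) z
          = (n : ℂ) * wdP i (wdbP j (fun w => ((Real.log (r2 w) : ℝ) : ℂ))) z ∧
      -wdP i (wdbP j (fun w => ((Real.log ((r2 w)⁻¹ ^ n) : ℝ) : ℂ))) z
          = RicHopf n z i j) ∧
    (∀ t : ℝ, ∀ i j : Fin n, gHopf z i j - (t : ℂ) * RicHopf n z i j = AHopf n t z i j) ∧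
    (∀ t : ℝ, 0 ≤ t → t < 1 / n → (AHopf n t z).PosDef) ∧
    (∀ t : ℝ, 0 ≤ t → t < 1 / n → ∀ i j : Fin n,
      (-wdP i (wdbP j (fun w => Complex.log ((AHopf n t w).det))) z = RicHopf n z i j) ∧
      deriv (fun s : ℝ => AHopf n s z i j) t = -RicHopf n z i j) := by
  have hr : 0 < r2 z := r2_pos hz
  have hr' : r2 z ≠ 0 := hr.ne'
  have hRc : ((r2 z : ℝ) : ℂ) ≠ 0 := Complex.ofReal_ne_zero.mpr hr'
  refine ⟨fun i j => ?_, fun t i j => ?_, fun t ht0 ht1 => ?_, fun t ht0 ht1 i j => ⟨?_, ?_⟩⟩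
  · have hp := wdP_master i j z hr' (-(n:ℂ)) _
      (by filter_upwards [eventually_r2_ne z hr'] with w hw using wdbP_fpow j w hw)
    have hl := wdP_master i j z hr' 1 _
      (by
        filter_upwards [eventually_r2_ne z hr'] with w hw
        rw [wdbP_logr2 j w hw, one_mul])
    constructor
    · rw [hp, hl]; ring
    · rw [hp, RicHopf]; simp only [Matrix.of_apply]; ring
  · rw [gHopf, RicHopf, AHopf]
    simp only [Matrix.of_apply]
    by_cases hij : i = j <;> simp [hij] <;> push_cast <;> field_simp <;> ring
  · exact posDef_AHopf t z hz (one_sub_nt_pos t ht0 ht1)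
      (mul_nonneg (Nat.cast_nonneg n) ht0)
  · have hp := wdP_master i j z hr' (-(n:ℂ)) _
      (by filter_upwards [eventually_r2_ne z hr'] with w hw using
        wdbP_fdet t (one_sub_nt_pos t ht0 ht1) j w hw)
    rw [hp, RicHopf]; simp only [Matrix.of_apply]; ring
  · exact deriv_AHopf z i j t
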